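/- In the Wheatstone graph Physarum dynamics with x_a* < x_b*: (i) the region {x_a > x_b*, x_b > x_b*} and (by symmetry) {x_a < x_a*, x_b < x_a*} are not entered from outside; (ii) in the region x_a, x_b ∈ [x_a*, x_b*], x_a decreases and x_b increases; hence the direction of the middle edge can change at most once inside this region. -/

import Mathlib

/-- The denominator `S` in the Wheatstone-graph dynamics. -/
noncomputable def Sden (Ca Cb Cc Cd Ce : ℝ → ℝ) (t : ℝ) : ℝ :=
  Ca t * Cb t * (Cc t + Cd t) + (Ca t + Cb t) * Cc t * Cd t +
    (Ca t + Cb t) * (Cc t + Cd t) * Ce t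

/-- Wheatstone graph, Physarum dynamics on the conductances
`C_x = D_x/L_x` (Miyaji–Ohnishi equations), with `x_a = C_c/(C_a+C_c)`,
`x_b = C_d/(C_b+C_d)`, `x_a* = L_a/(L_a+L_c)`, `x_b* = L_b/(L_b+L_d)` and
`x_a* < x_b*`:
(i) the region `{x_a > x_b*, x_b > x_b*}` and, by symmetry, the region
`{x_a < x_a*, x_b < x_a*}` cannot be entered from outside;
(ii) in the region `x_a, x_b ∈ [x_a*, x_b*]`, `x_a` decreases and `x_b`
increases; hence the direction of the middle edge changes at most once while
the state remains in this region. -/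
lemma invariance_aux {f g : ℝ → ℝ} {c : ℝ}
    (hdf : Differentiable ℝ f) (hdg : Differentiable ℝ g)
    (key : ∀ s, c < f s → c < g s → deriv f s ≤ 0 ∧ deriv g s ≤ 0)
    {t₀ t : ℝ} (ht : t₀ ≤ t) (h0 : f t₀ ≤ c ∨ g t₀ ≤ c) :
    f t ≤ c ∨ g t ≤ c := by
  by_contra hcon
  push_neg at hcon
  obtain ⟨hft, hgt⟩ := hcon
  set A : Set ℝ := Set.Icc t₀ t ∩ (f ⁻¹' Set.Iic c ∪ g ⁻¹' Set.Iic c) with hA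
  have hAne : A.Nonempty := ⟨t₀, ⟨le_refl _, ht⟩, h0⟩
  have hAcp : IsCompact A := (isCompact_Icc.inter_right
    ((isClosed_Iic.preimage hdf.continuous).union (isClosed_Iic.preimage hdg.continuous)))
  have hu := hAcp.sSup_mem hAne
  set u := sSup A with hudef
  obtain ⟨⟨hu0, hut⟩, huc⟩ := hu
  have hult : u < t := by
    rcases lt_or_eq_of_le hut with h | h
    · exact h
    · exfalso; rw [h] at huc
      rcases huc with h' | h' <;> simp at h' <;> linarith
  have hIoo : ∀ s ∈ Set.Ioo u t, c < f s ∧ c < g s := by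
    intro s hs
    by_contra hcon2
    push_neg at hcon2
    have hsA : s ∈ A := by
      refine ⟨⟨le_trans hu0 hs.1.le, hs.2.le⟩, ?_⟩
      by_cases hcf : c < f s
      · exact Or.inr (Set.mem_Iic.mpr (hcon2 hcf))
      · exact Or.inl (Set.mem_Iic.mpr (le_of_not_gt hcf))
    exact absurd (le_csSup ⟨t, fun x hx => hx.1.2⟩ hsA) (not_le.mpr hs.1)
  have hconv : Convex ℝ (Set.Icc u t) := convex_Icc u t
  have hderiv : ∀ s ∈ interior (Set.Icc u t), deriv f s ≤ 0 ∧ deriv g s ≤ 0 := by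
    intro s hs
    rw [interior_Icc] at hs
    exact key s (hIoo s hs).1 (hIoo s hs).2
  have haf : AntitoneOn f (Set.Icc u t) :=
    antitoneOn_of_deriv_nonpos hconv hdf.continuous.continuousOn
      (hdf.differentiableOn) (fun s hs => (hderiv s hs).1)
  have hag : AntitoneOn g (Set.Icc u t) :=
    antitoneOn_of_deriv_nonpos hconv hdg.continuous.continuousOn
      (hdg.differentiableOn) (fun s hs => (hderiv s hs).2)
  have h1 := haf ⟨le_refl u, hut⟩ ⟨hult.le, le_refl t⟩ hult.le
  have h2 := hag ⟨le_refl u, hut⟩ ⟨hult.le, le_refl t⟩ hult.le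
  rcases huc with h' | h' <;> simp at h' <;> linarith

theorem wheatstone_regimes (La Lb Lc Ld Le : ℝ)
    (hLa : 0 < La) (hLb : 0 < Lb) (hLc : 0 < Lc) (hLd : 0 < Ld)
    (hLe : 0 < Le)
    (Ca Cb Cc Cd Ce : ℝ → ℝ)
    (hpos : ∀ t, 0 < Ca t ∧ 0 < Cb t ∧ 0 < Cc t ∧ 0 < Cd t ∧ 0 < Ce t)
    (hCe : Continuous Ce)
    (hdynA : ∀ t, HasDerivAt Ca (Ca t / (Sden Ca Cb Cc Cd Ce t * La) *
      (Cb t * Cc t + Cc t * Cd t + Cc t * Ce t + Cd t * Ce t) - Ca t) t)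
    (hdynB : ∀ t, HasDerivAt Cb (Cb t / (Sden Ca Cb Cc Cd Ce t * Lb) *
      (Ca t * Cd t + Cd t * Cc t + Cd t * Ce t + Cc t * Ce t) - Cb t) t)
    (hdynC : ∀ t, HasDerivAt Cc (Cc t / (Sden Ca Cb Cc Cd Ce t * Lc) *
      (Ca t * Cd t + Ca t * Cb t + Ca t * Ce t + Cb t * Ce t) - Cc t) t)
    (hdynD : ∀ t, HasDerivAt Cd (Cd t / (Sden Ca Cb Cc Cd Ce t * Ld) *
      (Cb t * Cc t + Cb t * Ca t + Cb t * Ce t + Ca t * Ce t) - Cd t) t)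
    (xa xb : ℝ → ℝ)
    (hxa : ∀ t, xa t = Cc t / (Ca t + Cc t))
    (hxb : ∀ t, xb t = Cd t / (Cb t + Cd t))
    (xas xbs : ℝ)
    (hxas : xas = La / (La + Lc)) (hxbs : xbs = Lb / (Lb + Ld))
    (hlt : xas < xbs) :
    -- (i) the two corner regions cannot be entered
    (∀ t₀ t, t₀ ≤ t → ¬(xbs < xa t₀ ∧ xbs < xb t₀) →
      ¬(xbs < xa t ∧ xbs < xb t)) ∧
    (∀ t₀ t, t₀ ≤ t → ¬(xa t₀ < xas ∧ xb t₀ < xas) →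
      ¬(xa t < xas ∧ xb t < xas)) ∧
    -- (ii) monotonicity in the middle region
    (∀ t, xas ≤ xa t → xa t ≤ xbs → xas ≤ xb t → xb t ≤ xbs →
      deriv xa t ≤ 0 ∧ 0 ≤ deriv xb t) ∧
    -- hence the middle-edge direction changes at most once in this region
    (∀ t₁ t₂, t₁ ≤ t₂ →
      (∀ s, t₁ ≤ s → s ≤ t₂ →
        xas ≤ xa s ∧ xa s ≤ xbs ∧ xas ≤ xb s ∧ xb s ≤ xbs) →
      xa t₁ ≤ xb t₁ → xa t₂ ≤ xb t₂) := by
    -- basic positivity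
  have hS : ∀ t, 0 < Sden Ca Cb Cc Cd Ce t := by
    intro t
    obtain ⟨ha, hb, hc, hd, he⟩ := hpos t
    unfold Sden; positivity
  have hac : ∀ t, 0 < Ca t + Cc t := fun t => add_pos (hpos t).1 (hpos t).2.2.1
  have hbd : ∀ t, 0 < Cb t + Cd t := fun t => add_pos (hpos t).2.1 (hpos t).2.2.2.1
  have hLac : 0 < La + Lc := by linarith
  have hLbd : 0 < Lb + Ld := by linarith
  have hxaF : xa = fun t => Cc t / (Ca t + Cc t) := funext hxa
  have hxbF : xb = fun t => Cd t / (Cb t + Cd t) := funext hxb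
  -- derivative formulas
  have hDa : ∀ t, HasDerivAt xa (Ca t * Cc t *
      ((Cb t + Cd t + Ce t) * (Ca t * La - Cc t * Lc) + Ce t * (Cb t * La - Cd t * Lc)) /
      (Sden Ca Cb Cc Cd Ce t * La * Lc * (Ca t + Cc t)^2)) t := by
    intro t
    rw [hxaF]
    have h := (hdynC t).div ((hdynA t).add (hdynC t)) (ne_of_gt (hac t))
    refine h.congr_deriv ?_
    have hS' := (hS t).ne'
    have h1 := (hac t).ne'
    simp only [Pi.add_apply]
    field_simp
    unfold Sden
    ring
  have hDb : ∀ t, HasDerivAt xb (Cb t * Cd t *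
      ((Ca t + Cc t + Ce t) * (Cb t * Lb - Cd t * Ld) + Ce t * (Ca t * Lb - Cc t * Ld)) /
      (Sden Ca Cb Cc Cd Ce t * Lb * Ld * (Cb t + Cd t)^2)) t := by
    intro t
    rw [hxbF]
    have h := (hdynD t).div ((hdynB t).add (hdynD t)) (ne_of_gt (hbd t))
    refine h.congr_deriv ?_
    have hS' := (hS t).ne'
    have h1 := (hbd t).ne'
    simp only [Pi.add_apply]
    field_simp
    unfold Sden
    ring
  have hdiffa : Differentiable ℝ xa := fun t => (hDa t).differentiableAt
  have hdiffb : Differentiable ℝ xb := fun t => (hDb t).differentiableAt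
  have hda : ∀ t, deriv xa t = Ca t * Cc t *
      ((Cb t + Cd t + Ce t) * (Ca t * La - Cc t * Lc) + Ce t * (Cb t * La - Cd t * Lc)) /
      (Sden Ca Cb Cc Cd Ce t * La * Lc * (Ca t + Cc t)^2) := fun t => (hDa t).deriv
  have hdb : ∀ t, deriv xb t = Cb t * Cd t *
      ((Ca t + Cc t + Ce t) * (Cb t * Lb - Cd t * Ld) + Ce t * (Ca t * Lb - Cc t * Ld)) /
      (Sden Ca Cb Cc Cd Ce t * Lb * Ld * (Cb t + Cd t)^2) := fun t => (hDb t).deriv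
  -- translation iffs
  have iffA1 : ∀ t, xas ≤ xa t ↔ Ca t * La ≤ Cc t * Lc := by
    intro t
    rw [hxas, hxa t, div_le_div_iff₀ hLac (hac t)]
    constructor <;> intro h <;> nlinarith
  have iffA2 : ∀ t, xas ≤ xb t ↔ Cb t * La ≤ Cd t * Lc := by
    intro t
    rw [hxas, hxb t, div_le_div_iff₀ hLac (hbd t)]
    constructor <;> intro h <;> nlinarith
  have iffB1 : ∀ t, xa t ≤ xbs ↔ Cc t * Ld ≤ Ca t * Lb := by
    intro t
    rw [hxbs, hxa t, div_le_div_iff₀ (hac t) hLbd]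
    constructor <;> intro h <;> nlinarith
  have iffB2 : ∀ t, xb t ≤ xbs ↔ Cd t * Ld ≤ Cb t * Lb := by
    intro t
    rw [hxbs, hxb t, div_le_div_iff₀ (hbd t) hLbd]
    constructor <;> intro h <;> nlinarith
  have iffB1' : ∀ t, xbs ≤ xa t ↔ Ca t * Lb ≤ Cc t * Ld := by
    intro t
    rw [hxbs, hxa t, div_le_div_iff₀ hLbd (hac t)]
    constructor <;> intro h <;> nlinarith
  have iffB2' : ∀ t, xbs ≤ xb t ↔ Cb t * Lb ≤ Cd t * Ld := by
    intro t
    rw [hxbs, hxb t, div_le_div_iff₀ hLbd (hbd t)]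
    constructor <;> intro h <;> nlinarith
  have iffA1' : ∀ t, xa t ≤ xas ↔ Cc t * Lc ≤ Ca t * La := by
    intro t
    rw [hxas, hxa t, div_le_div_iff₀ (hac t) hLac]
    constructor <;> intro h <;> nlinarith
  have iffA2' : ∀ t, xb t ≤ xas ↔ Cd t * Lc ≤ Cb t * La := by
    intro t
    rw [hxas, hxb t, div_le_div_iff₀ (hbd t) hLac]
    constructor <;> intro h <;> nlinarith
  -- the four key sign lemmas
  have key1 : ∀ t, xas ≤ xa t → xas ≤ xb t → deriv xa t ≤ 0 := by
    intro t h1 h2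
    rw [iffA1 t] at h1; rw [iffA2 t] at h2
    obtain ⟨ha, hb, hc, hd, he⟩ := hpos t
    rw [hda t]
    apply div_nonpos_of_nonpos_of_nonneg
    · have f1 : (Cb t + Cd t + Ce t) * (Ca t * La - Cc t * Lc) ≤ 0 :=
        mul_nonpos_of_nonneg_of_nonpos (by positivity) (by linarith)
      have f2 : Ce t * (Cb t * La - Cd t * Lc) ≤ 0 :=
        mul_nonpos_of_nonneg_of_nonpos he.le (by linarith)
      exact mul_nonpos_of_nonneg_of_nonpos (by positivity) (by linarith)
    · have := hS t; positivity
  have key4 : ∀ t, xa t ≤ xas → xb t ≤ xas → 0 ≤ deriv xa t := by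
    intro t h1 h2
    rw [iffA1' t] at h1; rw [iffA2' t] at h2
    obtain ⟨ha, hb, hc, hd, he⟩ := hpos t
    rw [hda t]
    apply div_nonneg
    · have f1 : 0 ≤ (Cb t + Cd t + Ce t) * (Ca t * La - Cc t * Lc) :=
        mul_nonneg (by positivity) (by linarith)
      have f2 : 0 ≤ Ce t * (Cb t * La - Cd t * Lc) :=
        mul_nonneg he.le (by linarith)
      exact mul_nonneg (by positivity) (by linarith)
    · have := hS t; positivity
  have key2 : ∀ t, xa t ≤ xbs → xb t ≤ xbs → 0 ≤ deriv xb t := by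
    intro t h1 h2
    rw [iffB1 t] at h1; rw [iffB2 t] at h2
    obtain ⟨ha, hb, hc, hd, he⟩ := hpos t
    rw [hdb t]
    apply div_nonneg
    · have f1 : 0 ≤ (Ca t + Cc t + Ce t) * (Cb t * Lb - Cd t * Ld) :=
        mul_nonneg (by positivity) (by linarith)
      have f2 : 0 ≤ Ce t * (Ca t * Lb - Cc t * Ld) :=
        mul_nonneg he.le (by linarith)
      exact mul_nonneg (by positivity) (by linarith)
    · have := hS t; positivity
  have key3 : ∀ t, xbs ≤ xa t → xbs ≤ xb t → deriv xb t ≤ 0 := by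
    intro t h1 h2
    rw [iffB1' t] at h1; rw [iffB2' t] at h2
    obtain ⟨ha, hb, hc, hd, he⟩ := hpos t
    rw [hdb t]
    apply div_nonpos_of_nonpos_of_nonneg
    · have f1 : (Ca t + Cc t + Ce t) * (Cb t * Lb - Cd t * Ld) ≤ 0 :=
        mul_nonpos_of_nonneg_of_nonpos (by positivity) (by linarith)
      have f2 : Ce t * (Ca t * Lb - Cc t * Ld) ≤ 0 :=
        mul_nonpos_of_nonneg_of_nonpos he.le (by linarith)
      exact mul_nonpos_of_nonneg_of_nonpos (by positivity) (by linarith)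
    · have := hS t; positivity
  refine ⟨?_, ?_, ?_, ?_⟩
  · -- upper corner region not entered
    intro t₀ t ht h0 hcon
    have h0' : xa t₀ ≤ xbs ∨ xb t₀ ≤ xbs := by
      by_contra h; push_neg at h; exact h0 ⟨h.1, h.2⟩
    have := invariance_aux hdiffa hdiffb
      (fun s hs1 hs2 => ⟨key1 s (le_of_lt (lt_trans hlt hs1)) (le_of_lt (lt_trans hlt hs2)),
        key3 s hs1.le hs2.le⟩) ht h0'
    rcases this with h | h
    · exact absurd hcon.1 (not_lt.mpr h)
    · exact absurd hcon.2 (not_lt.mpr h)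
  · -- lower corner region not entered
    intro t₀ t ht h0 hcon
    have h0' : (fun s => -xa s) t₀ ≤ -xas ∨ (fun s => -xb s) t₀ ≤ -xas := by
      by_contra h; push_neg at h
      simp only [neg_lt_neg_iff] at h
      exact h0 ⟨h.1, h.2⟩
    have hdna : Differentiable ℝ (fun s => -xa s) := hdiffa.neg
    have hdnb : Differentiable ℝ (fun s => -xb s) := hdiffb.neg
    have := invariance_aux hdna hdnb (fun s hs1 hs2 => by
      simp only [neg_lt_neg_iff] at hs1 hs2
      have e1 : deriv (fun s => -xa s) s = -deriv xa s := by
        simp [deriv.neg]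
      have e2 : deriv (fun s => -xb s) s = -deriv xb s := by
        simp [deriv.neg]
      rw [e1, e2]
      constructor
      · linarith [key4 s hs1.le hs2.le]
      · linarith [key2 s (le_of_lt (lt_trans hs1 hlt)) (le_of_lt (lt_trans hs2 hlt))])
      ht h0'
    rcases this with h | h <;> simp only [neg_le_neg_iff] at h
    · exact absurd hcon.1 (not_lt.mpr h)
    · exact absurd hcon.2 (not_lt.mpr h)
  · -- monotonicity in the middle region
    intro t h1 h2 h3 h4
    exact ⟨key1 t h1 h3, key2 t h2 h4⟩
  · -- direction change at most once
    intro t₁ t₂ ht hreg hle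
    have haf : AntitoneOn xa (Set.Icc t₁ t₂) := by
      apply antitoneOn_of_deriv_nonpos (convex_Icc t₁ t₂) hdiffa.continuous.continuousOn
        hdiffa.differentiableOn
      intro s hs
      rw [interior_Icc] at hs
      obtain ⟨r1, r2, r3, r4⟩ := hreg s hs.1.le hs.2.le
      exact key1 s r1 r3
    have hgm : MonotoneOn xb (Set.Icc t₁ t₂) := by
      apply monotoneOn_of_deriv_nonneg (convex_Icc t₁ t₂) hdiffb.continuous.continuousOn
        hdiffb.differentiableOn
      intro s hs
      rw [interior_Icc] at hs
      obtain ⟨r1, r2, r3, r4⟩ := hreg s hs.1.le hs.2.le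
      exact key2 s r2 r4
    have h1 := haf ⟨le_refl t₁, ht⟩ ⟨ht, le_refl t₂⟩ ht
    have h2 := hgm ⟨le_refl t₁, ht⟩ ⟨ht, le_refl t₂⟩ ht
    linarith
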